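/- For every integer k ≥ 2 and every constant D, if there exists a map f : Δ_k → C([0, ω^{k−1}]) satisfying d_Δ(σ,τ) ≤ ‖f(σ) − f(τ)‖_∞ ≤ D·d_Δ(σ,τ) for all σ, τ ∈ Δ_k, then D ≥ k/(k−1). -/

import Mathlib

noncomputable instance (a : Ordinal) : CompactSpace (Set.Iic a) :=
  isCompact_iff_compactSpace.mp (by rw [← Set.Icc_bot]; exact isCompact_Icc)

namespace DeltaKAux

open Ordinal Filter Set

/-- If `β` is approached strictly from below by multiples of `ω ^ j`, then `ω ^ (j+1) ∣ β`. -/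
lemma dvd_of_approach (j : Ordinal) (β : Ordinal) (T : Set Ordinal)
    (hT : ∀ y ∈ T, omega0 ^ j ∣ y)
    (happ : ∀ a < β, ∃ y ∈ T, a < y ∧ y < β) :
    omega0 ^ (j + 1) ∣ β := by
  have hΩ0 : omega0 ^ j ≠ 0 := opow_ne_zero j omega0_ne_zero
  have hΩpos : (0 : Ordinal) < omega0 ^ j := pos_iff_ne_zero.mpr hΩ0
  have hpow : omega0 ^ (j + 1) = omega0 ^ j * omega0 := by
    rw [add_one_eq_succ, opow_succ]
  rw [hpow, Ordinal.dvd_iff_mod_eq_zero]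
  by_contra hr
  set m := omega0 ^ j * omega0 with hm
  set r := β % m with hrdef
  set b := m * (β / m) with hbdef
  have hdm : b + r = β := Ordinal.div_add_mod β m
  have hrpos : (0:Ordinal) < r := pos_iff_ne_zero.mpr hr
  have hm0 : m ≠ 0 := _root_.mul_ne_zero hΩ0 omega0_ne_zero
  have hrlt : r < m := Ordinal.mod_lt β hm0
  obtain ⟨βq, hβq⟩ : omega0 ^ j ∣ b := ⟨omega0 * (β / m), by rw [hbdef, hm, mul_assoc]⟩
  have hblt : b < β := by
    rw [← hdm]
    simpa using (add_lt_add_iff_left b).mpr hrpos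
  have key : ∀ n : ℕ, b + (omega0 ^ j) * n < β := by
    intro n
    induction n with
    | zero => simpa using hblt
    | succ n ih =>
      obtain ⟨y, hyT, hay, hyβ⟩ := happ _ ih
      obtain ⟨γ, hγ⟩ := hT y hyT
      have hby : b ≤ y := le_of_lt (lt_of_le_of_lt (le_self_add (a := b)) hay)
      have h1 : βq ≤ γ := by
        rw [hβq, hγ] at hby
        exact (mul_le_mul_iff_right₀ hΩpos).mp hby
      have hy2 : y = b + (omega0 ^ j) * (γ - βq) := by
        rw [hβq, hγ, ← mul_add, Ordinal.add_sub_cancel_of_le h1]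
      have h2 : (n : Ordinal) < γ - βq := by
        rw [hy2] at hay
        exact (mul_lt_mul_iff_right₀ hΩpos).mp ((add_lt_add_iff_left b).mp hay)
      have h3 : b + (omega0 ^ j) * ((n+1 : ℕ) : Ordinal) ≤ y := by
        rw [hy2]
        gcongr
        push_cast
        rw [Order.add_one_le_iff]
        exact h2
      exact lt_of_le_of_lt h3 hyβ
  have h4 : ∀ n : ℕ, (omega0 ^ j) * n ≤ r := by
    intro n
    have hlt := key n
    rw [← hdm] at hlt
    exact le_of_lt ((add_lt_add_iff_left b).mp hlt)
  have h5 : omega0 ≤ r / (omega0 ^ j) := by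
    rw [omega0_le]
    intro n
    rw [Ordinal.le_div hΩ0]
    exact h4 n
  have h6 : m ≤ r := by
    rw [hm]
    exact le_trans (show omega0 ^ j * omega0 ≤ omega0 ^ j * (r / omega0 ^ j) by gcongr) (Ordinal.mul_div_le r _)
  exact absurd hrlt (not_lt.mpr h6)

variable {A : Ordinal}

/-- An infinite set of multiples of `ω ^ j` in `[0, A]` has a limit point which is a nonzero
multiple of `ω ^ (j+1)`. -/
lemma exists_limit_point (j : Ordinal) (S : Set (Set.Iic A)) (hS : S.Infinite)
    (hdvd : ∀ x ∈ S, omega0 ^ j ∣ (x : Ordinal)) :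
    ∃ p ∈ closure S, ((p : Ordinal) ≠ 0) ∧ omega0 ^ (j + 1) ∣ (p : Ordinal) := by
  classical
  let e : ℕ ↪ ↥S := Set.Infinite.natEmbedding S hS
  let u : ℕ → Set.Iic A := fun n => ((e n : ↥S) : Set.Iic A)
  have hu_inj : Function.Injective u := by
    intro n m h
    exact e.injective (Subtype.ext h)
  have huS : ∀ n, u n ∈ S := fun n => (e n).2
  obtain ⟨p, hp⟩ := exists_clusterPt_of_compactSpace (Filter.map u Filter.atTop)
  have freq : ∀ U : Set (Set.Iic A), IsOpen U → p ∈ U → ∀ N : ℕ, ∃ n, N ≤ n ∧ u n ∈ U := by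
    intro U hU hpU N
    have h2 : u '' Set.Ici N ∈ Filter.map u Filter.atTop :=
      image_mem_map (mem_atTop N)
    obtain ⟨x, hx1, hx2⟩ := (clusterPt_iff_nonempty.mp hp) (hU.mem_nhds hpU) h2
    obtain ⟨n, hn, rfl⟩ := hx2
    exact ⟨n, hn, hx1⟩
  have hpc : p ∈ closure S := by
    rw [mem_closure_iff_clusterPt]
    apply hp.mono
    rw [le_principal_iff, mem_map]
    filter_upwards [univ_mem] with n _
    exact huS n
  have hp0 : (p : Ordinal) ≠ 0 := by
    intro h0
    have hopen : IsOpen {x : Set.Iic A | (x : Ordinal) < 1} :=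
      (isOpen_Iio (a := (1 : Ordinal))).preimage continuous_subtype_val
    have hpU : p ∈ {x : Set.Iic A | (x : Ordinal) < 1} := by
      simp only [Set.mem_setOf_eq, h0]
      exact zero_lt_one
    obtain ⟨n, -, hn⟩ := freq _ hopen hpU 0
    obtain ⟨n', hn', hn'2⟩ := freq _ hopen hpU (n + 1)
    have heq : u n = u n' := by
      apply Subtype.ext
      rw [Ordinal.lt_one_iff_zero.mp hn, Ordinal.lt_one_iff_zero.mp hn'2]
    have := hu_inj heq
    omega
  have happ : ∀ a < (p : Ordinal), ∃ y ∈ S, a < (y : Ordinal) ∧ (y : Ordinal) < (p : Ordinal) := by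
    intro a ha
    have pick : ∀ U : Set (Set.Iic A), IsOpen U → p ∈ U →
        (∀ n, u n ∈ U → ((u n : Set.Iic A) : Ordinal) ≤ (p : Ordinal)) →
        (∀ n, u n ∈ U → a < ((u n : Set.Iic A) : Ordinal)) →
        ∃ y ∈ S, a < (y : Ordinal) ∧ (y : Ordinal) < (p : Ordinal) := by
      intro U hU hpU hle hgt
      obtain ⟨n, -, hn⟩ := freq U hU hpU 0
      obtain ⟨n', hn', hn'U⟩ := freq U hU hpU (n + 1)
      have hne : u n ≠ u n' := fun h => by have := hu_inj h; omega
      rcases lt_or_eq_of_le (hle n hn) with h | h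
      · exact ⟨u n, huS n, hgt n hn, h⟩
      · rcases lt_or_eq_of_le (hle n' hn'U) with h' | h'
        · exact ⟨u n', huS n', hgt n' hn'U, h'⟩
        · exact absurd (Subtype.ext (h.trans h'.symm)) hne
    by_cases hP : ∃ n, (p : Ordinal) < ((u n : Set.Iic A) : Ordinal)
    · set P := {o : Ordinal | (∃ n, ((u n : Set.Iic A) : Ordinal) = o) ∧ (p : Ordinal) < o}
        with hPdef
      have hPne : P.Nonempty := by
        obtain ⟨n, hn⟩ := hP
        exact ⟨_, ⟨n, rfl⟩, hn⟩
      have hmP : sInf P ∈ P := csInf_mem hPne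
      apply pick (Subtype.val ⁻¹' (Set.Ioo a (sInf P)))
        ((isOpen_Ioo).preimage continuous_subtype_val) ⟨ha, hmP.2⟩
      · intro n hn
        by_contra hlt
        push_neg at hlt
        have : ((u n : Set.Iic A) : Ordinal) ∈ P := ⟨⟨n, rfl⟩, hlt⟩
        exact absurd (csInf_le (OrderBot.bddBelow P) this) (not_le.mpr hn.2)
      · intro n hn
        exact hn.1
    · push_neg at hP
      apply pick (Subtype.val ⁻¹' (Set.Ioi a))
        ((isOpen_Ioi).preimage continuous_subtype_val) ha
      · intro n _
        exact hP n
      · intro n hn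
        exact hn
  refine ⟨p, hpc, hp0, dvd_of_approach j _ {o : Ordinal | ∃ y ∈ S, (y : Ordinal) = o} ?_ ?_⟩
  · rintro o ⟨y, hy, rfl⟩
    exact hdvd y hy
  · intro a ha
    obtain ⟨y, hyS, h1, h2⟩ := happ a ha
    exact ⟨_, ⟨y, hyS, rfl⟩, h1, h2⟩


/-- Pigeonhole: from an infinite index set, two indices whose functions are uniformly
`2θ`-close on a finite set of points. -/
lemma pigeon (z : ℕ → C(Set.Iic A, ℝ)) (Cb θ : ℝ) (hθ : 0 < θ)
    (hbd : ∀ n x, |z n x| ≤ Cb) (F : Set (Set.Iic A)) (hF : F.Finite)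
    (N : Set ℕ) (hN : N.Infinite) :
    ∃ n ∈ N, ∃ m ∈ N, n ≠ m ∧ ∀ p ∈ F, |z n p - z m p| < 2 * θ := by
  classical
  set F' := hF.toFinset with hF'
  set φ : ℕ → (F' → ℤ) := fun n q => ⌊z n q.1 / θ⌋ with hφ
  set T : Set (F' → ℤ) := {g | ∀ q, g q ∈ Set.Icc ⌊-Cb / θ⌋ ⌊Cb / θ⌋} with hT
  have hmaps : Set.MapsTo φ N T := by
    intro n _
    intro q
    have h1 : -Cb ≤ z n q.1 := neg_le_of_abs_le (hbd n q.1)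
    have h2 : z n q.1 ≤ Cb := le_of_abs_le (hbd n q.1)
    constructor
    · exact Int.floor_le_floor (by apply div_le_div_of_nonneg_right h1 hθ.le)
    · exact Int.floor_le_floor (by apply div_le_div_of_nonneg_right h2 hθ.le)
  have hfin : T.Finite := by
    apply Set.Finite.subset
      (Set.Finite.pi (t := fun _ : F' => Set.Icc ⌊-Cb / θ⌋ ⌊Cb / θ⌋) (fun _ => Set.finite_Icc _ _))
    intro g hg
    rw [Set.mem_pi]
    intro q _
    exact hg q
  obtain ⟨n, hn, m, hm, hnm, heq⟩ := hN.exists_ne_map_eq_of_mapsTo hmaps hfin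
  refine ⟨n, hn, m, hm, hnm, ?_⟩
  intro p hp
  have hq : p ∈ F' := hF.mem_toFinset.mpr hp
  have h1 : ⌊z n p / θ⌋ = ⌊z m p / θ⌋ := congrFun heq ⟨p, hq⟩
  have hθ0 : θ ≠ 0 := ne_of_gt hθ
  have e1 : z n p / θ < ⌊z n p / θ⌋ + 1 := Int.lt_floor_add_one _
  have e2 : (⌊z n p / θ⌋ : ℝ) ≤ z n p / θ := Int.floor_le _
  have e3 : z m p / θ < ⌊z m p / θ⌋ + 1 := Int.lt_floor_add_one _
  have e4 : (⌊z m p / θ⌋ : ℝ) ≤ z m p / θ := Int.floor_le _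
  rw [h1] at e1 e2
  have hd : |z n p / θ - z m p / θ| < 1 := by
    rw [abs_lt]
    constructor <;> linarith
  have : |z n p - z m p| = |z n p / θ - z m p / θ| * θ := by
    rw [div_sub_div_same, abs_div, abs_of_pos hθ, div_mul_cancel₀ _ hθ0]
  rw [this]
  nlinarith [abs_nonneg (z n p / θ - z m p / θ)]


/-- The separation property: every pair of disjoint `h`-element index sets admits a witness
point in `W` where all `z a` (`a ∈ s`) exceed all `z b` (`b ∈ t`) by `2θ`, or conversely. -/
def Sep (z : ℕ → C(Set.Iic A, ℝ)) (θ : ℝ) (h : ℕ) (W : Set (Set.Iic A)) : Prop :=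
  ∀ s t : Finset ℕ, s.card = h → t.card = h → Disjoint s t →
    ∃ x ∈ W, (∀ a ∈ s, ∀ b ∈ t, z b x + 2 * θ ≤ z a x) ∨
      (∀ a ∈ s, ∀ b ∈ t, z a x + 2 * θ ≤ z b x)

lemma Sep.mono {z : ℕ → C(Set.Iic A, ℝ)} {θ : ℝ} {h : ℕ} {W W' : Set (Set.Iic A)}
    (hWW' : W ⊆ W') (hs : Sep z θ h W) : Sep z θ h W' := by
  intro s t hsc htc hd
  obtain ⟨x, hxW, hor⟩ := hs s t hsc htc hd
  exact ⟨x, hWW' hxW, hor⟩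

/-- The descent lemma: separation at level `h+1` with witnesses among multiples of `ω^j`
yields separation at level `h` with witnesses among nonzero multiples of `ω^(j+1)`. -/
lemma descent (z : ℕ → C(Set.Iic A, ℝ)) (Cb θ : ℝ) (hθ : 0 < θ)
    (hbd : ∀ n x, |z n x| ≤ Cb) (j : Ordinal) (h : ℕ)
    (hsep : Sep z θ (h + 1) {x : Set.Iic A | omega0 ^ j ∣ (x : Ordinal)}) :
    Sep z θ h {x : Set.Iic A | (x : Ordinal) ≠ 0 ∧ omega0 ^ (j + 1) ∣ (x : Ordinal)} := by
  intro s t hsc htc hdisj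
  classical
  set Wp : Set (Set.Iic A) :=
    {x | omega0 ^ j ∣ (x : Ordinal) ∧ ∀ a ∈ s, ∀ b ∈ t, z b x + 2 * θ ≤ z a x} with hWp
  set Wm : Set (Set.Iic A) :=
    {x | omega0 ^ j ∣ (x : Ordinal) ∧ ∀ a ∈ s, ∀ b ∈ t, z a x + 2 * θ ≤ z b x} with hWm
  have hclosedp : IsClosed {x : Set.Iic A | ∀ a ∈ s, ∀ b ∈ t, z b x + 2 * θ ≤ z a x} := by
    have : {x : Set.Iic A | ∀ a ∈ s, ∀ b ∈ t, z b x + 2 * θ ≤ z a x} =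
        ⋂ a ∈ s, ⋂ b ∈ t, {x : Set.Iic A | z b x + 2 * θ ≤ z a x} := by
      ext x
      simp
    rw [this]
    refine isClosed_biInter fun a _ => isClosed_biInter fun b _ => ?_
    exact isClosed_le (by fun_prop) (by fun_prop)
  have hclosedm : IsClosed {x : Set.Iic A | ∀ a ∈ s, ∀ b ∈ t, z a x + 2 * θ ≤ z b x} := by
    have : {x : Set.Iic A | ∀ a ∈ s, ∀ b ∈ t, z a x + 2 * θ ≤ z b x} =
        ⋂ a ∈ s, ⋂ b ∈ t, {x : Set.Iic A | z a x + 2 * θ ≤ z b x} := by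
      ext x
      simp
    rw [this]
    refine isClosed_biInter fun a _ => isClosed_biInter fun b _ => ?_
    exact isClosed_le (by fun_prop) (by fun_prop)
  by_cases hWpi : Wp.Infinite
  · obtain ⟨p, hpc, hp0, hpd⟩ := exists_limit_point j Wp hWpi (fun x hx => hx.1)
    refine ⟨p, ⟨hp0, hpd⟩, Or.inl ?_⟩
    have hsub : closure Wp ⊆ {x : Set.Iic A | ∀ a ∈ s, ∀ b ∈ t, z b x + 2 * θ ≤ z a x} :=
      closure_minimal (fun x hx => hx.2) hclosedp
    exact hsub hpc
  · by_cases hWmi : Wm.Infinite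
    · obtain ⟨p, hpc, hp0, hpd⟩ := exists_limit_point j Wm hWmi (fun x hx => hx.1)
      refine ⟨p, ⟨hp0, hpd⟩, Or.inr ?_⟩
      have hsub : closure Wm ⊆ {x : Set.Iic A | ∀ a ∈ s, ∀ b ∈ t, z a x + 2 * θ ≤ z b x} :=
        closure_minimal (fun x hx => hx.2) hclosedm
      exact hsub hpc
    · exfalso
      have hF : (Wp ∪ Wm).Finite := (Set.not_infinite.mp hWpi).union (Set.not_infinite.mp hWmi)
      have hNinf : {n : ℕ | n ∉ s ∧ n ∉ t}.Infinite := by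
        have hEq : {n : ℕ | n ∉ s ∧ n ∉ t} = ((↑s ∪ ↑t : Set ℕ))ᶜ := by
          ext n
          simp [not_or]
        rw [hEq]
        exact Set.Finite.infinite_compl ((s.finite_toSet).union (t.finite_toSet))
      obtain ⟨n, hn, m, hm, hnm, hclose⟩ := pigeon z Cb θ hθ hbd _ hF _ hNinf
      have hns : n ∉ s := hn.1
      have hnt : n ∉ t := hn.2
      have hms : m ∉ s := hm.1
      have hmt : m ∉ t := hm.2
      have hcards : (insert n s).card = h + 1 := by
        rw [Finset.card_insert_of_notMem hns, hsc]
      have hcardt : (insert m t).card = h + 1 := by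
        rw [Finset.card_insert_of_notMem hmt, htc]
      have hdisj2 : Disjoint (insert n s) (insert m t) := by
        rw [Finset.disjoint_left]
        intro a ha hb
        rcases Finset.mem_insert.mp ha with rfl | ha'
        · rcases Finset.mem_insert.mp hb with h' | h'
          · exact hnm h'
          · exact hnt h'
        · rcases Finset.mem_insert.mp hb with h' | h'
          · exact hms (h' ▸ ha')
          · exact (Finset.disjoint_left.mp hdisj ha') h'
      obtain ⟨x, hxd, hor⟩ := hsep (insert n s) (insert m t) hcards hcardt hdisj2
      rcases hor with hineq | hineq
      · have hxW : x ∈ Wp :=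
          ⟨hxd, fun a ha b hb =>
            hineq a (Finset.mem_insert_of_mem ha) b (Finset.mem_insert_of_mem hb)⟩
        have h2θ : z m x + 2 * θ ≤ z n x :=
          hineq n (Finset.mem_insert_self n s) m (Finset.mem_insert_self m t)
        have habs := hclose x (Set.mem_union_left _ hxW)
        rw [abs_lt] at habs
        linarith [habs.2]
      · have hxW : x ∈ Wm :=
          ⟨hxd, fun a ha b hb =>
            hineq a (Finset.mem_insert_of_mem ha) b (Finset.mem_insert_of_mem hb)⟩
        have h2θ : z n x + 2 * θ ≤ z m x :=
          hineq n (Finset.mem_insert_self n s) m (Finset.mem_insert_self m t)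
        have habs := hclose x (Set.mem_union_right _ hxW)
        rw [abs_lt] at habs
        linarith [habs.1]

end DeltaKAux

open Ordinal

/-- For `k ≥ 2`, any `D` such that some `f : Δ_k → C([0, ω^(k−1)])` satisfies
`d_Δ(σ,τ) ≤ ‖f σ − f τ‖ ≤ D·d_Δ(σ,τ)` must satisfy `D ≥ k/(k−1)`. -/
theorem distortion_lower_bound_deltaK_C_omega_pow_pred (k : ℕ) (hk : 2 ≤ k) (D : ℝ)
    (f : {σ : Finset ℕ // σ.card ≤ k} →
      C(↥(Set.Iic (Ordinal.omega0 ^ ((k - 1 : ℕ) : Ordinal))), ℝ))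
    (hf : ∀ σ τ : {σ : Finset ℕ // σ.card ≤ k},
      ((symmDiff σ.1 τ.1).card : ℝ) ≤ ‖f σ - f τ‖ ∧
        ‖f σ - f τ‖ ≤ D * ((symmDiff σ.1 τ.1).card : ℝ)) :
    (k : ℝ) / ((k : ℝ) - 1) ≤ D := by
  classical
  by_contra hcon
  push_neg at hcon
  have hk1 : (1 : ℝ) ≤ (k : ℝ) - 1 := by
    have h2 : (2 : ℝ) ≤ (k : ℝ) := by exact_mod_cast hk
    linarith
  have hkpos : (0 : ℝ) < (k : ℝ) - 1 := by linarith
  set θ : ℝ := (k : ℝ) - ((k : ℝ) - 1) * D with hθdef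
  have hθ : 0 < θ := by
    have h2 : D * ((k : ℝ) - 1) < (k : ℝ) := (lt_div_iff₀ hkpos).mp hcon
    rw [hθdef]
    nlinarith
  have hcard1 : ∀ n : ℕ, ({n} : Finset ℕ).card ≤ k := fun n => by
    simp only [Finset.card_singleton]
    omega
  have hcard0 : (∅ : Finset ℕ).card ≤ k := by simp
  set sing : ℕ → {σ : Finset ℕ // σ.card ≤ k} := fun n => ⟨{n}, hcard1 n⟩ with hsing
  set empt : {σ : Finset ℕ // σ.card ≤ k} := ⟨∅, hcard0⟩ with hempt
  set z : ℕ → C(Set.Iic (Ordinal.omega0 ^ ((k - 1 : ℕ) : Ordinal)), ℝ) := fun n => f (sing n) with hz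
  have hD1 : (1 : ℝ) ≤ D := by
    have h1 := (hf (sing 0) empt).1
    have h2 := (hf (sing 0) empt).2
    have hcd : (symmDiff (({0} : Finset ℕ)) (∅ : Finset ℕ)).card = 1 := by
      rw [← Finset.bot_eq_empty, symmDiff_bot]
      simp
    simp only [hsing, hempt] at h1 h2
    rw [hcd] at h1 h2
    push_cast at h1 h2
    linarith
  have hD0 : (0 : ℝ) ≤ D := by linarith
  set Cb : ℝ := D + ‖f empt‖ with hCb
  have hbd : ∀ n x, |z n x| ≤ Cb := by
    intro n x
    have h1 : |z n x - f empt x| ≤ ‖f (sing n) - f empt‖ := by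
      have h := (f (sing n) - f empt).norm_coe_le_norm x
      simpa [ContinuousMap.sub_apply, Real.norm_eq_abs, hz] using h
    have h2 : ‖f (sing n) - f empt‖ ≤ D := by
      have h := (hf (sing n) empt).2
      have hcd : (symmDiff (({n} : Finset ℕ)) (∅ : Finset ℕ)).card = 1 := by
        rw [← Finset.bot_eq_empty, symmDiff_bot]
        simp
      simp only [hsing, hempt] at h
      rw [hcd] at h
      push_cast at h
      linarith
    have h3 : |f empt x| ≤ ‖f empt‖ := by
      have h := (f empt).norm_coe_le_norm x
      simpa [Real.norm_eq_abs] using h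
    have h4 : |z n x| - |f empt x| ≤ |z n x - f empt x| := abs_sub_abs_le_abs_sub _ _
    rw [hCb]
    linarith
  -- peeling bound
  have peel : ∀ (nn : ℕ) (s : Finset ℕ) (hs : s.card ≤ k), s.card = nn → ∀ a ∈ s,
      ∀ x : Set.Iic (Ordinal.omega0 ^ ((k - 1 : ℕ) : Ordinal)), |f ⟨s, hs⟩ x - z a x| ≤ D * ((nn - 1 : ℕ) : ℝ) := by
    intro nn
    induction nn with
    | zero =>
      intro s hs h0 a ha x
      rw [Finset.card_eq_zero] at h0
      subst h0
      simp at ha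
    | succ nn ih =>
      intro s hs hcard a ha x
      by_cases hone : s = {a}
      · have hEq : (⟨s, hs⟩ : {σ : Finset ℕ // σ.card ≤ k}) = sing a := by
          apply Subtype.ext
          simp [hone, hsing]
        rw [hEq]
        have : f (sing a) x - z a x = 0 := by
          simp [hz]
        rw [this, abs_zero]
        positivity
      · obtain ⟨b, hb, hba⟩ : ∃ b ∈ s, b ≠ a := by
          by_contra hno
          push_neg at hno
          exact hone (Finset.eq_singleton_iff_unique_mem.mpr ⟨ha, fun c hc => hno c hc⟩)
        set s' := s.erase b with hs'def
        have hs'le : s'.card ≤ k := le_trans (Finset.card_erase_le) hs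
        have hc' : s'.card = nn := by
          rw [hs'def, Finset.card_erase_of_mem hb, hcard]
          omega
        have ha' : a ∈ s' := Finset.mem_erase.mpr ⟨Ne.symm hba, ha⟩
        have hnn1 : 1 ≤ nn := by
          have hpos : 0 < s'.card := Finset.card_pos.mpr ⟨a, ha'⟩
          omega
        have hstep : |f ⟨s, hs⟩ x - f ⟨s', hs'le⟩ x| ≤ D := by
          have hnorm := (hf ⟨s, hs⟩ ⟨s', hs'le⟩).2
          have hsd : symmDiff s s' = {b} := by
            ext c
            simp only [Finset.mem_symmDiff, hs'def, Finset.mem_erase, Finset.mem_singleton]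
            constructor
            · rintro (⟨hcs, hcn⟩ | ⟨⟨hcb, hcs⟩, hcns⟩)
              · by_contra hcb
                exact hcn ⟨hcb, hcs⟩
              · exact absurd hcs hcns
            · rintro rfl
              exact Or.inl ⟨hb, fun hh => hh.1 rfl⟩
          rw [hsd] at hnorm
          simp only [Finset.card_singleton] at hnorm
          push_cast at hnorm
          have hpt : |f ⟨s, hs⟩ x - f ⟨s', hs'le⟩ x| ≤ ‖f ⟨s, hs⟩ - f ⟨s', hs'le⟩‖ := by
            have h := (f ⟨s, hs⟩ - f ⟨s', hs'le⟩).norm_coe_le_norm x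
            simpa [ContinuousMap.sub_apply, Real.norm_eq_abs] using h
          linarith
        have hrec := ih s' hs'le hc' a ha' x
        have htri : |f ⟨s, hs⟩ x - z a x| ≤
            |f ⟨s, hs⟩ x - f ⟨s', hs'le⟩ x| + |f ⟨s', hs'le⟩ x - z a x| := abs_sub_le _ _ _
        have hcast : ((nn - 1 : ℕ) : ℝ) = (nn : ℝ) - 1 := by
          rw [Nat.cast_sub hnn1, Nat.cast_one]
        have hcast2 : ((nn + 1 - 1 : ℕ) : ℝ) = (nn : ℝ) := by
          rw [Nat.add_sub_cancel]
        rw [hcast2]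
        rw [hcast] at hrec
        linarith
  -- initial separation at level k
  haveI hNE : Nonempty (Set.Iic (Ordinal.omega0 ^ ((k - 1 : ℕ) : Ordinal))) := ⟨⟨0, Set.mem_Iic.mpr zero_le⟩⟩
  have sep0 : DeltaKAux.Sep z θ k {x : Set.Iic (Ordinal.omega0 ^ ((k - 1 : ℕ) : Ordinal)) | omega0 ^ ((0 : ℕ) : Ordinal) ∣ (x : Ordinal)} := by
    intro s t hsc htc hdisj
    have hsk : s.card ≤ k := le_of_eq hsc
    have htk : t.card ≤ k := le_of_eq htc
    set g := f ⟨s, hsk⟩ - f ⟨t, htk⟩ with hg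
    have hlow : 2 * (k : ℝ) ≤ ‖g‖ := by
      have h1 := (hf ⟨s, hsk⟩ ⟨t, htk⟩).1
      have hsd : (symmDiff s t).card = 2 * k := by
        rw [hdisj.symmDiff_eq_sup, Finset.sup_eq_union, Finset.card_union_of_disjoint hdisj,
          hsc, htc]
        omega
      rw [hsd] at h1
      push_cast at h1
      linarith
    obtain ⟨x₀, -, hx₀⟩ := isCompact_univ.exists_isMaxOn (Set.univ_nonempty)
      ((g.continuous.abs).continuousOn (s := Set.univ))
    have hmax : ∀ y : Set.Iic (Ordinal.omega0 ^ ((k - 1 : ℕ) : Ordinal)), |g y| ≤ |g x₀| := fun y => hx₀ (Set.mem_univ y)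
    have hnorm : ‖g‖ ≤ |g x₀| := by
      rw [ContinuousMap.norm_le _ (abs_nonneg _)]
      intro y
      simpa [Real.norm_eq_abs] using hmax y
    have hbig : 2 * (k : ℝ) ≤ |g x₀| := le_trans hlow hnorm
    have h1k : 1 ≤ k := by omega
    have hks : ((k - 1 : ℕ) : ℝ) = (k : ℝ) - 1 := by
      rw [Nat.cast_sub h1k, Nat.cast_one]
    have hgx : g x₀ = f ⟨s, hsk⟩ x₀ - f ⟨t, htk⟩ x₀ := by
      simp [hg, ContinuousMap.sub_apply]
    refine ⟨x₀, ?_, ?_⟩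
    · show omega0 ^ ((0 : ℕ) : Ordinal) ∣ (x₀ : Ordinal)
      rw [Nat.cast_zero, opow_zero]
      exact one_dvd _
    rcases le_or_gt 0 (g x₀) with hsign | hsign
    · left
      intro a ha b hb
      have h1 := peel k s hsk hsc a ha x₀
      have h2 := peel k t htk htc b hb x₀
      rw [hks] at h1 h2
      rw [abs_le] at h1 h2
      rw [abs_of_nonneg hsign, hgx] at hbig
      rw [hθdef]
      linarith [h1.1, h1.2, h2.1, h2.2]
    · right
      intro a ha b hb
      have h1 := peel k s hsk hsc a ha x₀
      have h2 := peel k t htk htc b hb x₀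
      rw [hks] at h1 h2
      rw [abs_le] at h1 h2
      rw [abs_of_neg hsign, hgx] at hbig
      rw [hθdef]
      linarith [h1.1, h1.2, h2.1, h2.2]
  -- descend k times
  have chain : ∀ i : ℕ, i ≤ k →
      DeltaKAux.Sep z θ (k - i)
        {x : Set.Iic (Ordinal.omega0 ^ ((k - 1 : ℕ) : Ordinal)) | omega0 ^ ((i : ℕ) : Ordinal) ∣ (x : Ordinal) ∧
          (i = 0 ∨ (x : Ordinal) ≠ 0)} := by
    intro i
    induction i with
    | zero =>
      intro _
      simp only [Nat.sub_zero]
      apply DeltaKAux.Sep.mono ?_ sep0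
      intro x hx
      exact ⟨hx, Or.inl (by trivial)⟩
    | succ i ih =>
      intro hik
      have hi : i ≤ k := by omega
      have prev := ih hi
      have prev' : DeltaKAux.Sep z θ ((k - (i + 1)) + 1)
          {x : Set.Iic (Ordinal.omega0 ^ ((k - 1 : ℕ) : Ordinal)) | omega0 ^ ((i : ℕ) : Ordinal) ∣ (x : Ordinal)} := by
        have hkk : (k - (i + 1)) + 1 = k - i := by omega
        rw [hkk]
        exact DeltaKAux.Sep.mono (fun x hx => hx.1) prev
      have hd := DeltaKAux.descent z Cb θ hθ hbd ((i : ℕ) : Ordinal) (k - (i + 1)) prev'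
      apply DeltaKAux.Sep.mono ?_ hd
      intro x hx
      refine ⟨?_, Or.inr hx.1⟩
      have hcast : (((i + 1 : ℕ)) : Ordinal) = ((i : ℕ) : Ordinal) + 1 := by
        push_cast
        rfl
      rw [hcast]
      exact hx.2
  have final := chain k le_rfl
  obtain ⟨x, hx, -⟩ := final ∅ ∅ (by simp) (by simp) (by simp)
  obtain ⟨hdvd, hne⟩ := hx
  have hne' : (x : Ordinal) ≠ 0 := by
    rcases hne with h | h
    · exact absurd h (by omega)
    · exact h
  have h1 : omega0 ^ ((k : ℕ) : Ordinal) ≤ (x : Ordinal) := Ordinal.le_of_dvd hne' hdvd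
  have h2 : (x : Ordinal) ≤ Ordinal.omega0 ^ ((k - 1 : ℕ) : Ordinal) := x.2
  have h3 : Ordinal.omega0 ^ ((k - 1 : ℕ) : Ordinal) < omega0 ^ ((k : ℕ) : Ordinal) := by
    rw [Ordinal.opow_lt_opow_iff_right one_lt_omega0]
    exact_mod_cast (by omega : k - 1 < k)
  exact absurd (le_trans h1 h2) (not_le.mpr h3)
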